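/- arXiv:0910.5435 — 2 statements merged into one kernel-verified Lean document; each statement's English description precedes it below -/
import Mathlib

section
/- For any nonnegative integer m and any x in (-1,1), x² P̄^m_l(x) = d_l P̄^m_l(x) + c_l P̄^m_{l+2}(x) holds for l = m and l = m+1, where c_l = sqrt((l-m+1)(l-m+2)(l+m+1)(l+m+2) / ((2l+1)(2l+3)²(2l+5))) and d_l = (2l(l+1) - 2m² - 1) / ((2l-1)(2l+3)). -/
open scoped Nat

/-- The Legendre polynomial of degree `l`, via Rodrigues' formula. -/
noncomputable def legendreP (l : ℕ) : ℝ → ℝ := fun x =>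
  (1 / (2 ^ l * (l ! : ℝ))) * iteratedDeriv l (fun y : ℝ => (y ^ 2 - 1) ^ l) x

/-- The normalized associated Legendre function `P̄_l^m`. -/
noncomputable def nalf (m l : ℕ) : ℝ → ℝ := fun x =>
  Real.sqrt ((2 * l + 1) / 2 * ((l - m)! : ℝ) / ((l + m)! : ℝ)) *
    (1 - x ^ 2) ^ ((m : ℝ) / 2) * iteratedDeriv m (legendreP l) x

/-- The spectral (l²-operator) norm of a real matrix. -/
noncomputable def specNorm {α β : Type*} [Fintype α] [Fintype β] [DecidableEq α] [DecidableEq β]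
    (A : Matrix α β ℝ) : ℝ :=
  ‖LinearMap.toContinuousLinearMap (Matrix.toEuclideanLin A)‖

/-- The singular values of a real matrix, listed in decreasing order. -/
noncomputable def singularValues {p q : ℕ} (A : Matrix (Fin p) (Fin q) ℝ) : List ℝ :=
  List.insertionSort (· ≥ ·)
    (List.ofFn fun i => Real.sqrt ((show (A.transpose * A).IsHermitian by
      simpa [Matrix.conjTranspose_eq_transpose_of_trivial] using
        Matrix.isHermitian_conjTranspose_mul_self A).eigenvalues i))

noncomputable def ccoef (m l : ℕ) : ℝ :=
  Real.sqrt ((((l : ℝ) - m + 1) * ((l : ℝ) - m + 2) * ((l : ℝ) + m + 1) * ((l : ℝ) + m + 2)) /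
    ((2 * (l : ℝ) + 1) * (2 * (l : ℝ) + 3) ^ 2 * (2 * (l : ℝ) + 5)))

noncomputable def dcoef (m l : ℕ) : ℝ :=
  (2 * (l : ℝ) * ((l : ℝ) + 1) - 2 * (m : ℝ) ^ 2 - 1) /
    ((2 * (l : ℝ) - 1) * (2 * (l : ℝ) + 3))

open Polynomial

private lemma iteratedDeriv_polyeval (p : ℝ[X]) (n : ℕ) :
    iteratedDeriv n (fun x => p.eval x) = fun x => (Polynomial.derivative^[n] p).eval x := by
  induction n with
  | zero => simp
  | succ n ih =>
    rw [iteratedDeriv_succ, ih, Function.iterate_succ_apply']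
    funext x
    exact Polynomial.deriv _

private lemma eval_iterate_derivative_pow (l k : ℕ) (x : ℝ) :
    (Polynomial.derivative^[k] (((X : ℝ[X]) ^ 2 - 1) ^ l)).eval x
      = ∑ i ∈ Finset.range (l + 1),
          (-1 : ℝ) ^ (i + l) * (l.choose i : ℝ) * ((2 * i).descFactorial k : ℝ)
            * x ^ (2 * i - k) := by
  have h : ((X : ℝ[X]) ^ 2 - 1) ^ l
      = ∑ i ∈ Finset.range (l + 1), C ((-1 : ℝ) ^ (i + l) * (l.choose i : ℝ)) * X ^ (2 * i) := by
    rw [sub_pow]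
    refine Finset.sum_congr rfl fun i _ => ?_
    rw [one_pow, mul_one, ← pow_mul, map_mul, map_pow, map_neg, map_one, map_natCast]
    ring
  rw [h, Polynomial.iterate_derivative_sum, Polynomial.eval_finset_sum]
  refine Finset.sum_congr rfl fun i _ => ?_
  rw [Polynomial.iterate_derivative_C_mul, Polynomial.iterate_derivative_X_pow_eq_natCast_mul]
  simp [mul_assoc]

private lemma evalA (m : ℕ) (x : ℝ) :
    (Polynomial.derivative^[m + m] (((X : ℝ[X]) ^ 2 - 1) ^ m)).eval x = ((2 * m)! : ℝ) := by
  rw [eval_iterate_derivative_pow, Finset.sum_range_succ, Finset.sum_eq_zero, zero_add]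
  · rw [show 2 * m - (m + m) = 0 by omega, show (2 * m).descFactorial (m + m)
      = (2 * m)! by rw [show m + m = 2 * m by ring, Nat.descFactorial_self]]
    simp [Even.neg_one_pow ⟨m, rfl⟩]
  · intro i hi
    rw [Finset.mem_range] at hi
    rw [Nat.descFactorial_of_lt (by omega : 2 * i < m + m)]
    simp

private lemma evalB (m : ℕ) (x : ℝ) :
    (Polynomial.derivative^[m + 1 + m] (((X : ℝ[X]) ^ 2 - 1) ^ (m + 1))).eval x
      = ((2 * m + 2)! : ℝ) * x := by
  rw [eval_iterate_derivative_pow, Finset.sum_range_succ, Finset.sum_eq_zero, zero_add]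
  · have hD : (2 * (m + 1)).descFactorial (m + 1 + m) = (2 * m + 2)! := by
      have h := Nat.factorial_mul_descFactorial (show m + 1 + m ≤ 2 * (m + 1) by omega)
      simpa [show 2 * (m + 1) - (m + 1 + m) = 1 by omega, mul_add,
        show 2 * m + 2 - (m + 1 + m) = 1 by omega] using h
    rw [hD, show 2 * (m + 1) - (m + 1 + m) = 1 by omega]
    simp [Even.neg_one_pow ⟨m + 1, rfl⟩]
  · intro i hi
    rw [Finset.mem_range] at hi
    rw [Nat.descFactorial_of_lt (by omega : 2 * i < m + 1 + m)]
    simp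

private lemma evalC (m : ℕ) (x : ℝ) :
    (Polynomial.derivative^[m + 2 + m] (((X : ℝ[X]) ^ 2 - 1) ^ (m + 2))).eval x
      = ((2 * m + 4)! : ℝ) / 2 * x ^ 2 - (m + 2) * ((2 * m + 2)! : ℝ) := by
  rw [eval_iterate_derivative_pow, Finset.sum_range_succ, Finset.sum_range_succ,
    Finset.sum_eq_zero, zero_add]
  · have hD2 : 2 * ((2 * (m + 2)).descFactorial (m + 2 + m)) = (2 * m + 4)! := by
      have h := Nat.factorial_mul_descFactorial (show m + 2 + m ≤ 2 * (m + 2) by omega)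
      have h2 : 2 * (m + 2) - (m + 2 + m) = 2 := by omega
      rw [h2] at h
      simpa [Nat.factorial, mul_add] using h
    have hD2' : (((2 * (m + 2)).descFactorial (m + 2 + m) : ℕ) : ℝ) = ((2 * m + 4)! : ℝ) / 2 := by
      have := congrArg (fun n : ℕ => (n : ℝ)) hD2
      push_cast at this
      linarith
    have hD1 : (2 * (m + 1)).descFactorial (m + 2 + m) = (2 * m + 2)! := by
      rw [show m + 2 + m = 2 * (m + 1) by omega, Nat.descFactorial_self,
        show 2 * (m + 1) = 2 * m + 2 by ring]
    rw [hD1, hD2', show 2 * (m + 2) - (m + 2 + m) = 2 by omega,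
      show 2 * (m + 1) - (m + 2 + m) = 0 by omega]
    have hodd : (-1 : ℝ) ^ (m + 1 + (m + 2)) = -1 := Odd.neg_one_pow ⟨m + 1, by ring⟩
    have heven : (-1 : ℝ) ^ (m + 2 + (m + 2)) = 1 := Even.neg_one_pow ⟨m + 2, rfl⟩
    rw [hodd, heven]
    have hch : (m + 2).choose (m + 1) = m + 2 := Nat.choose_succ_self_right (m + 1)
    rw [hch, Nat.choose_self]
    push_cast
    ring
  · intro i hi
    rw [Finset.mem_range] at hi
    rw [Nat.descFactorial_of_lt (by omega : 2 * i < m + 2 + m)]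
    simp

private lemma evalD (m : ℕ) (x : ℝ) :
    (Polynomial.derivative^[m + 3 + m] (((X : ℝ[X]) ^ 2 - 1) ^ (m + 3))).eval x
      = ((2 * m + 6)! : ℝ) / 6 * x ^ 3 - (m + 3) * ((2 * m + 4)! : ℝ) * x := by
  rw [eval_iterate_derivative_pow, Finset.sum_range_succ, Finset.sum_range_succ,
    Finset.sum_eq_zero, zero_add]
  · have hD2 : 6 * ((2 * (m + 3)).descFactorial (m + 3 + m)) = (2 * m + 6)! := by
      have h := Nat.factorial_mul_descFactorial (show m + 3 + m ≤ 2 * (m + 3) by omega)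
      have h2 : 2 * (m + 3) - (m + 3 + m) = 3 := by omega
      rw [h2] at h
      simpa [Nat.factorial, mul_add] using h
    have hD2' : (((2 * (m + 3)).descFactorial (m + 3 + m) : ℕ) : ℝ) = ((2 * m + 6)! : ℝ) / 6 := by
      have := congrArg (fun n : ℕ => (n : ℝ)) hD2
      push_cast at this
      linarith
    have hD1 : (2 * (m + 2)).descFactorial (m + 3 + m) = (2 * m + 4)! := by
      have h := Nat.factorial_mul_descFactorial (show m + 3 + m ≤ 2 * (m + 2) by omega)
      rw [show 2 * (m + 2) = 2 * m + 4 by ring] at h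
      simpa [show 2 * m + 4 - (m + 3 + m) = 1 by omega, mul_add] using h
    rw [hD1, hD2', show 2 * (m + 3) - (m + 3 + m) = 3 by omega,
      show 2 * (m + 2) - (m + 3 + m) = 1 by omega]
    have hodd : (-1 : ℝ) ^ (m + 2 + (m + 3)) = -1 := Odd.neg_one_pow ⟨m + 2, by ring⟩
    have heven : (-1 : ℝ) ^ (m + 3 + (m + 3)) = 1 := Even.neg_one_pow ⟨m + 3, rfl⟩
    rw [hodd, heven, Nat.choose_succ_self_right, Nat.choose_self]
    push_cast
    ring
  · intro i hi
    rw [Finset.mem_range] at hi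
    rw [Nat.descFactorial_of_lt (by omega : 2 * i < m + 3 + m)]
    simp

private lemma legendreP_poly (l : ℕ) :
    legendreP l = fun x =>
      ((C (1 / (2 ^ l * (l ! : ℝ)))
        * Polynomial.derivative^[l] (((X : ℝ[X]) ^ 2 - 1) ^ l)).eval x) := by
  funext x
  rw [legendreP]
  have h : (fun y : ℝ => (y ^ 2 - 1) ^ l) = fun y : ℝ => ((((X : ℝ[X]) ^ 2 - 1) ^ l).eval y) := by
    funext y; simp
  rw [h, iteratedDeriv_polyeval]
  simp

private lemma nalf_eval (m l : ℕ) (x : ℝ) :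
    nalf m l x = Real.sqrt ((2 * l + 1) / 2 * ((l - m)! : ℝ) / ((l + m)! : ℝ)) *
      (1 - x ^ 2) ^ ((m : ℝ) / 2) *
      ((1 / (2 ^ l * (l ! : ℝ))) *
        (Polynomial.derivative^[l + m] (((X : ℝ[X]) ^ 2 - 1) ^ l)).eval x) := by
  rw [nalf, legendreP_poly, iteratedDeriv_polyeval]
  rw [Polynomial.iterate_derivative_C_mul, ← Function.iterate_add_apply, Nat.add_comm m l]
  simp

private lemma nalfA (m : ℕ) (x : ℝ) :
    nalf m m x = Real.sqrt ((2 * (m : ℝ) + 1) / (2 * ((2 * m)! : ℝ)))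
      * (1 - x ^ 2) ^ ((m : ℝ) / 2) * (((2 * m)! : ℝ) / (2 ^ m * (m ! : ℝ))) := by
  rw [nalf_eval, evalA]
  congr 1
  · congr 2
    rw [Nat.sub_self, show m + m = 2 * m by ring]
    norm_num
    ring
  · ring

private lemma nalfB (m : ℕ) (x : ℝ) :
    nalf m (m + 1) x = Real.sqrt ((2 * (m : ℝ) + 3) / (2 * ((2 * m + 1)! : ℝ)))
      * (1 - x ^ 2) ^ ((m : ℝ) / 2)
      * (((2 * m + 2)! : ℝ) * x / (2 ^ (m + 1) * ((m + 1)! : ℝ))) := by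
  rw [nalf_eval, evalB]
  congr 1
  · congr 2
    rw [show m + 1 - m = 1 by omega, show m + 1 + m = 2 * m + 1 by ring]
    push_cast
    norm_num
    ring
  · ring

private lemma nalfC (m : ℕ) (x : ℝ) :
    nalf m (m + 2) x = Real.sqrt ((2 * (m : ℝ) + 5) / ((2 * m + 2)! : ℝ))
      * (1 - x ^ 2) ^ ((m : ℝ) / 2)
      * ((((2 * m + 4)! : ℝ) / 2 * x ^ 2 - ((m : ℝ) + 2) * ((2 * m + 2)! : ℝ))
          / (2 ^ (m + 2) * ((m + 2)! : ℝ))) := by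
  rw [nalf_eval, evalC]
  have hne : ((2 * m + 2)! : ℝ) ≠ 0 := Nat.cast_ne_zero.mpr (Nat.factorial_ne_zero _)
  congr 1
  · congr 2
    rw [show m + 2 - m = 2 by omega, show m + 2 + m = 2 * m + 2 by ring]
    push_cast
    rw [show (2)! = 2 from rfl]
    field_simp
    ring
  · ring

private lemma nalfD (m : ℕ) (x : ℝ) :
    nalf m (m + 3) x = Real.sqrt (3 * (2 * (m : ℝ) + 7) / ((2 * m + 3)! : ℝ))
      * (1 - x ^ 2) ^ ((m : ℝ) / 2)
      * ((((2 * m + 6)! : ℝ) / 6 * x ^ 3 - ((m : ℝ) + 3) * ((2 * m + 4)! : ℝ) * x)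
          / (2 ^ (m + 3) * ((m + 3)! : ℝ))) := by
  rw [nalf_eval, evalD]
  have hne : ((2 * m + 3)! : ℝ) ≠ 0 := Nat.cast_ne_zero.mpr (Nat.factorial_ne_zero _)
  congr 1
  · congr 2
    rw [show m + 3 - m = 3 by omega, show m + 3 + m = 2 * m + 3 by ring]
    push_cast
    rw [show (3)! = 6 from rfl]
    field_simp
    ring
  · ring

set_option maxHeartbeats 2000000 in
theorem three_term_recurrence_start (m : ℕ) (x : ℝ) (hx : x ∈ Set.Ioo (-1 : ℝ) 1) :
    (x ^ 2 * nalf m m x = dcoef m m * nalf m m x + ccoef m m * nalf m (m + 2) x) ∧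
    (x ^ 2 * nalf m (m + 1) x
      = dcoef m (m + 1) * nalf m (m + 1) x + ccoef m (m + 1) * nalf m (m + 3) x) := by
  have h2m1 : (0:ℝ) < 2*(m:ℝ)+1 := by positivity
  have h2m2 : (0:ℝ) < 2*(m:ℝ)+2 := by positivity
  have h2m3 : (0:ℝ) < 2*(m:ℝ)+3 := by positivity
  have h2m5 : (0:ℝ) < 2*(m:ℝ)+5 := by positivity
  have h2m7 : (0:ℝ) < 2*(m:ℝ)+7 := by positivity
  have hm1 : (0:ℝ) < (m:ℝ)+1 := by positivity
  have hm2 : (0:ℝ) < (m:ℝ)+2 := by positivity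
  have hm3 : (0:ℝ) < (m:ℝ)+3 := by positivity
  have hfm : (0:ℝ) < (m ! : ℝ) := by exact_mod_cast Nat.factorial_pos m
  have hf2m : (0:ℝ) < ((2*m)! : ℝ) := by exact_mod_cast Nat.factorial_pos _
  have hf2m1 : (0:ℝ) < ((2*m+1)! : ℝ) := by exact_mod_cast Nat.factorial_pos _
  have h2m1ne : 2*(m:ℝ) - 1 ≠ 0 := by
    intro h
    have h1 : ((2*m : ℕ) : ℝ) = 1 := by push_cast; linarith
    have h2 : (2*m : ℕ) = 1 := by exact_mod_cast h1
    omega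
  have e2m1 : ((2*m+1)! : ℝ) = (2*(m:ℝ)+1) * ((2*m)! : ℝ) := by
    rw [show 2*m+1 = (2*m)+1 by omega, Nat.factorial_succ]; push_cast; ring
  have e2m2 : ((2*m+2)! : ℝ) = (2*(m:ℝ)+2) * ((2*m+1)! : ℝ) := by
    rw [show 2*m+2 = (2*m+1)+1 by omega, Nat.factorial_succ]; push_cast; ring
  have e2m3 : ((2*m+3)! : ℝ) = (2*(m:ℝ)+3) * ((2*m+2)! : ℝ) := by
    rw [show 2*m+3 = (2*m+2)+1 by omega, Nat.factorial_succ]; push_cast; ring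
  have e2m4 : ((2*m+4)! : ℝ) = (2*(m:ℝ)+4) * ((2*m+3)! : ℝ) := by
    rw [show 2*m+4 = (2*m+3)+1 by omega, Nat.factorial_succ]; push_cast; ring
  have e2m5 : ((2*m+5)! : ℝ) = (2*(m:ℝ)+5) * ((2*m+4)! : ℝ) := by
    rw [show 2*m+5 = (2*m+4)+1 by omega, Nat.factorial_succ]; push_cast; ring
  have e2m6 : ((2*m+6)! : ℝ) = (2*(m:ℝ)+6) * ((2*m+5)! : ℝ) := by
    rw [show 2*m+6 = (2*m+5)+1 by omega, Nat.factorial_succ]; push_cast; ring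
  have em1 : ((m+1)! : ℝ) = ((m:ℝ)+1) * (m ! : ℝ) := by
    rw [Nat.factorial_succ]; push_cast; ring
  have em2 : ((m+2)! : ℝ) = ((m:ℝ)+2) * ((m+1)! : ℝ) := by
    rw [show m+2 = (m+1)+1 by omega, Nat.factorial_succ]; push_cast; ring
  have em3 : ((m+3)! : ℝ) = ((m:ℝ)+3) * ((m+2)! : ℝ) := by
    rw [show m+3 = (m+2)+1 by omega, Nat.factorial_succ]; push_cast; ring
  have hd1 : dcoef m m = 1/(2*(m:ℝ)+3) := by
    rw [dcoef, show (2*(m:ℝ)*((m:ℝ)+1) - 2*(m:ℝ)^2 - 1) = 2*(m:ℝ)-1 by ring]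
    rw [div_eq_div_iff (by exact mul_ne_zero h2m1ne h2m3.ne') h2m3.ne']
    ring
  have hd2 : dcoef m (m+1) = 3/(2*(m:ℝ)+5) := by
    rw [dcoef]
    push_cast
    rw [div_eq_div_iff (by nlinarith : ((2*((m:ℝ)+1)-1)*(2*((m:ℝ)+1)+3)) ≠ 0) h2m5.ne']
    ring
  have hcc1 : ccoef m m = Real.sqrt ((2*(2*(m:ℝ)+2))/((2*(m:ℝ)+3)^2*(2*(m:ℝ)+5))) := by
    rw [ccoef]
    congr 1
    rw [div_eq_div_iff (by positivity) (by positivity)]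
    ring
  have hcc2 : ccoef m (m+1)
      = Real.sqrt ((6*(2*(m:ℝ)+2))/((2*(m:ℝ)+5)^2*(2*(m:ℝ)+7))) := by
    rw [ccoef]
    congr 1
    push_cast
    rw [div_eq_div_iff (by positivity) (by positivity)]
    ring
  have hcN1 : ccoef m m * Real.sqrt ((2 * (m : ℝ) + 5) / ((2 * m + 2)! : ℝ))
      = (2/((2*(m:ℝ)+1)*(2*(m:ℝ)+3)))
        * Real.sqrt ((2 * (m : ℝ) + 1) / (2 * ((2 * m)! : ℝ))) := by
    rw [hcc1, ← Real.sqrt_mul (by positivity),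
      show (2/((2*(m:ℝ)+1)*(2*(m:ℝ)+3)))
        = Real.sqrt ((2/((2*(m:ℝ)+1)*(2*(m:ℝ)+3)))^2) from (Real.sqrt_sq (by positivity)).symm,
      ← Real.sqrt_mul (by positivity)]
    congr 1
    rw [e2m2, e2m1]
    field_simp
  have hcN2 : ccoef m (m+1) * Real.sqrt (3 * (2 * (m : ℝ) + 7) / ((2 * m + 3)! : ℝ))
      = (6/((2*(m:ℝ)+3)*(2*(m:ℝ)+5)))
        * Real.sqrt ((2 * (m : ℝ) + 3) / (2 * ((2 * m + 1)! : ℝ))) := by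
    rw [hcc2, ← Real.sqrt_mul (by positivity),
      show (6/((2*(m:ℝ)+3)*(2*(m:ℝ)+5)))
        = Real.sqrt ((6/((2*(m:ℝ)+3)*(2*(m:ℝ)+5)))^2) from (Real.sqrt_sq (by positivity)).symm,
      ← Real.sqrt_mul (by positivity)]
    congr 1
    rw [e2m3, e2m2]
    field_simp
    ring
  have key1 : x^2 * (((2*m)! : ℝ)/(2^m * (m ! : ℝ)))
      = (1/(2*(m:ℝ)+3)) * (((2*m)! : ℝ)/(2^m * (m ! : ℝ)))
      + (2/((2*(m:ℝ)+1)*(2*(m:ℝ)+3)))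
        * ((((2*m+4)! : ℝ)/2 * x^2 - ((m:ℝ)+2)*((2*m+2)! : ℝ))/(2^(m+2) * ((m+2)! : ℝ))) := by
    rw [e2m4, e2m3, e2m2, e2m1, em2, em1]
    field_simp
    ring
  have key2 : x^2 * (((2*m+2)! : ℝ)*x/(2^(m+1) * ((m+1)! : ℝ)))
      = (3/(2*(m:ℝ)+5)) * (((2*m+2)! : ℝ)*x/(2^(m+1) * ((m+1)! : ℝ)))
      + (6/((2*(m:ℝ)+3)*(2*(m:ℝ)+5)))
        * ((((2*m+6)! : ℝ)/6 * x^3 - ((m:ℝ)+3)*((2*m+4)! : ℝ)*x)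
            /(2^(m+3) * ((m+3)! : ℝ))) := by
    rw [e2m6, e2m5, e2m4, e2m3, e2m2, em3, em2, em1]
    field_simp
    ring
  constructor
  · rw [nalfA, nalfC, hd1]
    set SA := Real.sqrt ((2 * (m : ℝ) + 1) / (2 * ((2 * m)! : ℝ))) with hSA
    set SC := Real.sqrt ((2 * (m : ℝ) + 5) / ((2 * m + 2)! : ℝ)) with hSC
    set s := (1 - x^2) ^ ((m:ℝ)/2) with hs
    set TA := ((2*m)! : ℝ)/(2^m * (m ! : ℝ)) with hTA
    set TC := (((2*m+4)! : ℝ)/2 * x^2 - ((m:ℝ)+2)*((2*m+2)! : ℝ))/(2^(m+2) * ((m+2)! : ℝ))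
      with hTC
    linear_combination (SA * s) * key1 - (s * TC) * hcN1
  · rw [nalfB, nalfD, hd2]
    set SB := Real.sqrt ((2 * (m : ℝ) + 3) / (2 * ((2 * m + 1)! : ℝ))) with hSB
    set SD := Real.sqrt (3 * (2 * (m : ℝ) + 7) / ((2 * m + 3)! : ℝ)) with hSD
    set s := (1 - x^2) ^ ((m:ℝ)/2) with hs
    set TB := ((2*m+2)! : ℝ)*x/(2^(m+1) * ((m+1)! : ℝ)) with hTB
    set TD := (((2*m+6)! : ℝ)/6 * x^3 - ((m:ℝ)+3)*((2*m+4)! : ℝ)*x)/(2^(m+3) * ((m+3)! : ℝ))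
      with hTD
    linear_combination (SB * s) * key2 - (s * TD) * hcN2
end

section
/- Suppose à is a real k × n matrix (k ≤ n) such that some subset of k of its columns forms the k × k identity matrix and every entry of à has absolute value at most 2. Then the spectral norm of à is at most sqrt(4k(n-k)+1). -/
open scoped Nat

lemma my_aux_key (u2 v2 B2 c2 T : ℝ) (hu2 : 0 ≤ u2) (hv2 : 0 ≤ v2)
    (hc2nn : 0 ≤ c2) (hT2 : T ^ 2 ≤ u2 * B2) (hB2 : B2 ≤ c2 * v2) :
    u2 + 2 * T + B2 ≤ (c2 + 1) * (u2 + v2) := by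
  rcases le_or_gt T 0 with hT | hT
  · nlinarith [mul_nonneg hc2nn hu2, mul_nonneg hc2nn hv2]
  · have h4 : (2 * T) ^ 2 ≤ (c2 * u2 + v2) ^ 2 := by
      nlinarith [sq_nonneg (c2 * u2 - v2), hT2, hB2, hu2]
    have h6 : 2 * T ≤ c2 * u2 + v2 := by
      have h7 : 0 ≤ c2 * u2 + v2 := by positivity
      nlinarith [h4, hT]
    nlinarith [hB2, mul_nonneg hc2nn hu2]

theorem interp_matrix_norm_bound_two (k n : ℕ) (hkn : k ≤ n)
    (At : Matrix (Fin k) (Fin n) ℝ)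
    (hid : ∃ g : Fin k → Fin n, Function.Injective g ∧ At.submatrix id g = 1)
    (hent : ∀ i j, |At i j| ≤ 2) :
    specNorm At ≤ Real.sqrt ((4 * k * (n - k) + 1 : ℕ)) := by
  obtain ⟨g, hg, hsub⟩ := hid
  have hAg : ∀ i i', At i (g i') = if i = i' then 1 else 0 := by
    intro i i'
    have := congrFun (congrFun hsub i) i'
    simpa [Matrix.submatrix, Matrix.one_apply] using this
  obtain ⟨M, hM⟩ : ∃ M : ℝ, M = ((4 * k * (n - k) + 1 : ℕ) : ℝ) := ⟨_, rfl⟩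
  have hM1 : (1 : ℝ) ≤ M := by
    rw [hM]
    exact_mod_cast Nat.one_le_iff_ne_zero.2 (by omega)
  rw [specNorm]
  refine ContinuousLinearMap.opNorm_le_bound _ (Real.sqrt_nonneg _) fun x => ?_
  obtain ⟨S, hS⟩ : ∃ S : Finset (Fin n), S = Finset.univ.image g := ⟨_, rfl⟩
  have hcardS : S.card = k := by
    rw [hS, Finset.card_image_of_injective _ hg, Finset.card_univ, Fintype.card_fin]
  obtain ⟨u2, hu2def⟩ : ∃ u2 : ℝ, u2 = ∑ j ∈ S, x j ^ 2 := ⟨_, rfl⟩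
  obtain ⟨v2, hv2def⟩ : ∃ v2 : ℝ, v2 = ∑ j ∈ Sᶜ, x j ^ 2 := ⟨_, rfl⟩
  have hu2 : 0 ≤ u2 := hu2def ▸ Finset.sum_nonneg fun _ _ => sq_nonneg _
  have hv2 : 0 ≤ v2 := hv2def ▸ Finset.sum_nonneg fun _ _ => sq_nonneg _
  have hx2 : ‖x‖ ^ 2 = u2 + v2 := by
    rw [EuclideanSpace.norm_eq, Real.sq_sqrt (by positivity)]
    rw [hu2def, hv2def, Finset.sum_add_sum_compl]
    simp [Real.norm_eq_abs, sq_abs]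
  obtain ⟨b, hbdef⟩ : ∃ b : Fin k → ℝ, b = fun i => ∑ j ∈ Sᶜ, At i j * x j := ⟨_, rfl⟩
  obtain ⟨T, hTdef⟩ : ∃ T : ℝ, T = ∑ i, x (g i) * b i := ⟨_, rfl⟩
  obtain ⟨B2, hB2def⟩ : ∃ B2 : ℝ, B2 = ∑ i, b i ^ 2 := ⟨_, rfl⟩
  obtain ⟨c2, hc2def⟩ : ∃ c2 : ℝ, c2 = ∑ i, ∑ j ∈ Sᶜ, At i j ^ 2 := ⟨_, rfl⟩
  have hB2nn : 0 ≤ B2 := hB2def ▸ Finset.sum_nonneg fun _ _ => sq_nonneg _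
  have hc2nn : 0 ≤ c2 :=
    hc2def ▸ Finset.sum_nonneg fun _ _ => Finset.sum_nonneg fun _ _ => sq_nonneg _
  have hu2img : u2 = ∑ i, x (g i) ^ 2 := by
    rw [hu2def, hS, Finset.sum_image (fun a _ b _ h => hg h)]
  -- entry decomposition
  have hentry : ∀ i, (∑ j, At i j * x j) = x (g i) + b i := by
    intro i
    rw [← Finset.sum_add_sum_compl S, hbdef]
    congr 1
    rw [hS, Finset.sum_image (fun a _ b _ h => hg h)]
    simp only [hAg]
    simp [ite_mul]
  -- norm squared of A x
  have hnorm : ‖LinearMap.toContinuousLinearMap (Matrix.toEuclideanLin At) x‖ ^ 2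
      = ∑ i, (x (g i) + b i) ^ 2 := by
    rw [LinearMap.coe_toContinuousLinearMap', EuclideanSpace.norm_eq,
      Real.sq_sqrt (by positivity)]
    refine Finset.sum_congr rfl fun i _ => ?_
    rw [Real.norm_eq_abs, sq_abs]
    congr 1
    have : Matrix.toEuclideanLin At x i = ∑ j, At i j * x j := by
      simp [Matrix.toEuclideanLin_apply, Matrix.mulVec, dotProduct]
    rw [this, hentry i]
  have hexpand : (∑ i, (x (g i) + b i) ^ 2) = u2 + 2 * T + B2 := by
    have h : ∀ i : Fin k, (x (g i) + b i) ^ 2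
        = x (g i) ^ 2 + 2 * (x (g i) * b i) + b i ^ 2 := fun i => by ring
    rw [Finset.sum_congr rfl fun i _ => h i, Finset.sum_add_distrib,
      Finset.sum_add_distrib, ← Finset.mul_sum, hu2img, hTdef, hB2def]
  -- Cauchy-Schwarz bounds
  have hT2 : T ^ 2 ≤ u2 * B2 := by
    rw [hTdef, hu2img, hB2def]
    exact Finset.sum_mul_sq_le_sq_mul_sq _ _ _
  have hB2 : B2 ≤ c2 * v2 := by
    rw [hB2def, hc2def, hv2def, Finset.sum_mul]
    refine Finset.sum_le_sum fun i _ => ?_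
    simp only [hbdef]
    exact Finset.sum_mul_sq_le_sq_mul_sq _ _ _
  have hc2M : c2 + 1 ≤ M := by
    have hcard : Sᶜ.card = n - k := by
      rw [Finset.card_compl, hcardS, Fintype.card_fin]
    have : c2 ≤ ∑ _i : Fin k, ∑ _j ∈ Sᶜ, (4 : ℝ) := by
      rw [hc2def]
      refine Finset.sum_le_sum fun i _ => Finset.sum_le_sum fun j _ => ?_
      have h1 := hent i j
      nlinarith [abs_nonneg (At i j), sq_abs (At i j)]
    have h2 : (∑ _i : Fin k, ∑ _j ∈ Sᶜ, (4 : ℝ)) = 4 * k * ((n - k : ℕ) : ℝ) := by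
      simp only [Finset.sum_const, hcard, nsmul_eq_mul, Finset.card_univ, Fintype.card_fin]
      ring
    have h3 : c2 ≤ 4 * (k : ℝ) * ((n - k : ℕ) : ℝ) := h2 ▸ this
    rw [hM]
    push_cast
    linarith
  -- combine
  have hkey : u2 + 2 * T + B2 ≤ (c2 + 1) * (u2 + v2) :=
    my_aux_key u2 v2 B2 c2 T hu2 hv2 hc2nn hT2 hB2
  have hfinal : ‖LinearMap.toContinuousLinearMap (Matrix.toEuclideanLin At) x‖ ^ 2
      ≤ M * ‖x‖ ^ 2 := by
    rw [hnorm, hexpand, hx2]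
    calc u2 + 2 * T + B2 ≤ (c2 + 1) * (u2 + v2) := hkey
      _ ≤ M * (u2 + v2) := by
          have := mul_le_mul_of_nonneg_right hc2M (by linarith : (0:ℝ) ≤ u2 + v2)
          linarith
  have := Real.sqrt_le_sqrt hfinal
  rwa [Real.sqrt_sq (norm_nonneg _), Real.sqrt_mul (by linarith) _,
    Real.sqrt_sq (norm_nonneg _), hM] at this
end
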